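/- Let φ = Σ_{g ≥ 0} ε^{g−1} φ_g be a formal Laurent series in ε with coefficients φ_g in a differential ring, and fix i ≥ 0. For a finitely supported sequence (m_1, m_2, …) of nonnegative integers with Σ_j j·m_j = i, the ε-expansion of the product Π_{j ≥ 1} (∂_x^j φ)^{m_j} equals ε^{−i}(∂_x φ_0)^i + ε^{−i+1}·i·(∂_x φ_0)^{i−1}(∂_x φ_1) + O(ε^{−i+2}) if m_1 = i and m_j = 0 for j ≥ 2; equals ε^{−i+1}(∂_x φ_0)^{i−2}(∂_x² φ_0) + O(ε^{−i+2}) if m_1 = i − 2, m_2 = 1, and m_j = 0 for j ≥ 3; and is O(ε^{−i+2}) otherwise. -/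

import Mathlib

open Finset

variable {R : Type*} [CommRing R] [Algebra ℚ R]

/-- The formal Laurent series `Σ_{g ≥ 0} ε^{g−1} f_g` in the variable `ε`,
with coefficients `f_g` in `R`. -/
noncomputable def epsLaurent (f : ℕ → R) : HahnSeries ℤ R :=
  HahnSeries.single (-1 : ℤ) (1 : R) *
    HahnSeries.ofPowerSeries ℤ R (PowerSeries.mk f)

lemma ofPS_coeff_neg (F : PowerSeries R) (n : ℤ) (hn : n < 0) :
    (HahnSeries.ofPowerSeries ℤ R F).coeff n = 0 := by
  rw [HahnSeries.ofPowerSeries_apply]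
  apply HahnSeries.embDomain_notin_range
  rintro ⟨k, hk⟩
  have : (k : ℤ) = n := hk
  omega

lemma single_prod (s : Finset ℕ) (a : ℕ → ℤ) :
    ∏ j ∈ s, (HahnSeries.single (a j) (1:R)) = HahnSeries.single (∑ j ∈ s, a j) 1 := by
  classical
  induction s using Finset.induction with
  | empty =>
      simp only [Finset.prod_empty, Finset.sum_empty]
      exact (HahnSeries.single_zero_one).symm
  | insert j s h ih => rw [Finset.prod_insert h, Finset.sum_insert h, ih,
      HahnSeries.single_mul_single, one_mul]

lemma coeff_one_pow' (A : PowerSeries R) (n : ℕ) :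
    PowerSeries.coeff 1 (A ^ n) =
      n • ((PowerSeries.constantCoeff A) ^ (n - 1) * PowerSeries.coeff 1 A) := by
  induction n with
  | zero => simp
  | succ k ih =>
      rw [pow_succ, PowerSeries.coeff_one_mul, ih]
      rcases Nat.eq_zero_or_pos k with hk | hk
      · simp [hk]
      · have h1 : k - 1 + 1 = k := by omega
        rw [map_pow]
        simp only [smul_eq_mul, Nat.cast_succ, Nat.succ_sub_one]
        ring_nf
        rw [← pow_succ', h1]
        ring

lemma coeff_shift (M : ℕ) (F : PowerSeries R) (n : ℤ) :
    (HahnSeries.single (-(M:ℤ)) 1 * HahnSeries.ofPowerSeries ℤ R F).coeff n =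
      if 0 ≤ n + M then PowerSeries.coeff (n + M).toNat F else 0 := by
  have h := HahnSeries.coeff_single_mul_add (r := (1:R))
    (x := HahnSeries.ofPowerSeries ℤ R F) (a := n + M) (b := -(M:ℤ))
  rw [show (n + (M:ℤ)) + (-(M:ℤ)) = n by ring] at h
  rw [h, one_mul]
  split_ifs with hpos
  · have h2 : (((n + M).toNat : ℕ) : ℤ) = n + M := Int.toNat_of_nonneg hpos
    rw [← h2, HahnSeries.ofPowerSeries_apply_coeff]; congr 1
  · exact ofPS_coeff_neg _ _ (by omega)

lemma prod_epsLaurent (s : Finset ℕ) (f : ℕ → ℕ → R) (m : ℕ → ℕ) :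
    ∏ j ∈ s, (epsLaurent (f j)) ^ (m j) =
      HahnSeries.single (-(∑ j ∈ s, m j : ℕ) : ℤ) 1 *
        HahnSeries.ofPowerSeries ℤ R (∏ j ∈ s, (PowerSeries.mk (f j)) ^ (m j)) := by
  simp only [epsLaurent, mul_pow, Finset.prod_mul_distrib, HahnSeries.single_pow, one_pow,
    ← map_pow, ← map_prod, single_prod]
  congr 1
  congr 1
  push_cast
  simp [Finset.sum_neg_distrib]

/-- Let `φ = Σ_{g ≥ 0} ε^{g−1} φ_g` be a formal Laurent series in `ε` with
coefficients in a differential ring `(R, ∂ₓ)`, and fix `i ≥ 0`.  For a finitely supported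
sequence `(m₁, m₂, …)` of nonnegative integers with `Σ_j j·m_j = i`, consider the product
`P = Π_{j ≥ 1} (∂ₓ^j φ)^{m_j}`, where `∂ₓ` acts on `φ` coefficientwise.  Then:
* if `m₁ = i` and `m_j = 0` for `j ≥ 2`, then
  `P = ε^{−i}(∂ₓφ₀)^i + ε^{−i+1}·i·(∂ₓφ₀)^{i−1}(∂ₓφ₁) + O(ε^{−i+2})`;
* if `m₁ = i − 2`, `m₂ = 1` and `m_j = 0` for `j ≥ 3`, then
  `P = ε^{−i+1}(∂ₓφ₀)^{i−2}(∂ₓ²φ₀) + O(ε^{−i+2})`;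
* otherwise `P = O(ε^{−i+2})`;
where `O(ε^N)` means that all Laurent coefficients of `ε^n` with `n < N` vanish, so the
statement amounts to computing the coefficients of `ε^{−i}` and `ε^{−i+1}` of `P`. -/
theorem eps_expansion_of_monomial (D : Derivation ℚ R R) (φg : ℕ → R) (i : ℕ)
    (m : ℕ → ℕ) (hsupp : ∀ j : ℕ, i < j → m j = 0)
    (hsum : ∑ j ∈ Finset.Icc 1 i, j * m j = i)
    (P : HahnSeries ℤ R)
    (hP : P = ∏ j ∈ Finset.Icc 1 i,
        (epsLaurent (fun g => (⇑D)^[j] (φg g))) ^ (m j)) :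
    ((m 1 = i ∧ ∀ j : ℕ, 2 ≤ j → m j = 0) →
        P.coeff (-(i : ℤ)) = (D (φg 0)) ^ i ∧
        P.coeff (-(i : ℤ) + 1) = i • ((D (φg 0)) ^ (i - 1) * D (φg 1))) ∧
    ((m 1 = i - 2 ∧ m 2 = 1 ∧ ∀ j : ℕ, 3 ≤ j → m j = 0) →
        P.coeff (-(i : ℤ)) = 0 ∧
        P.coeff (-(i : ℤ) + 1) = (D (φg 0)) ^ (i - 2) * (⇑D)^[2] (φg 0)) ∧
    ((¬ (m 1 = i ∧ ∀ j : ℕ, 2 ≤ j → m j = 0) ∧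
      ¬ (m 1 = i - 2 ∧ m 2 = 1 ∧ ∀ j : ℕ, 3 ≤ j → m j = 0)) →
        P.coeff (-(i : ℤ)) = 0 ∧ P.coeff (-(i : ℤ) + 1) = 0) := by
  classical
  obtain ⟨M, hMdef⟩ : ∃ M, M = ∑ j ∈ Finset.Icc 1 i, m j := ⟨_, rfl⟩
  obtain ⟨F, hFdef⟩ : ∃ F, F = ∏ j ∈ Finset.Icc 1 i,
      (PowerSeries.mk (fun g => (⇑D)^[j] (φg g))) ^ (m j) := ⟨_, rfl⟩
  have hPc : ∀ n : ℤ, P.coeff n =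
      if 0 ≤ n + M then PowerSeries.coeff (n + M).toNat F else 0 := by
    intro n
    rw [hP, prod_epsLaurent (f := fun j g => (⇑D)^[j] (φg g)), ← hMdef, ← hFdef, coeff_shift]
  have key : M + ∑ j ∈ Finset.Icc 1 i, (j - 1) * m j = i := by
    conv_rhs => rw [← hsum]
    rw [hMdef, ← Finset.sum_add_distrib]
    apply Finset.sum_congr rfl
    intro j hj
    have h1 : 1 ≤ j := (Finset.mem_Icc.mp hj).1
    obtain ⟨k, rfl⟩ := Nat.exists_eq_add_of_le h1
    simp only [Nat.add_sub_cancel_left]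
    ring
  refine ⟨?_, ?_, ?_⟩
  · rintro ⟨h1, h2⟩
    have hMeq : M = i := by
      rw [hMdef]
      rcases Nat.eq_zero_or_pos i with hi | hi
      · subst hi; simp
      · rw [Finset.sum_eq_single_of_mem 1 (Finset.mem_Icc.mpr ⟨le_refl 1, hi⟩)
          (fun j hj hne => h2 j (by have := (Finset.mem_Icc.mp hj).1; omega))]
        exact h1
    have hFeq : F = (PowerSeries.mk (fun g => (⇑D)^[1] (φg g))) ^ i := by
      rw [hFdef]
      rcases Nat.eq_zero_or_pos i with hi | hi
      · subst hi; simp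
      · rw [Finset.prod_eq_single_of_mem 1 (Finset.mem_Icc.mpr ⟨le_refl 1, hi⟩)
          (fun j hj hne => by
            rw [h2 j (by have := (Finset.mem_Icc.mp hj).1; omega), pow_zero]), h1]
    constructor
    · rw [hPc, hMeq, if_pos (by omega)]
      rw [show (-(i:ℤ) + i).toNat = 0 from by omega]
      rw [hFeq, PowerSeries.coeff_zero_eq_constantCoeff, map_pow, PowerSeries.constantCoeff_mk]
      simp
    · rw [hPc, hMeq, if_pos (by omega)]
      rw [show (-(i:ℤ) + 1 + i).toNat = 1 from by omega]
      rw [hFeq, coeff_one_pow', PowerSeries.constantCoeff_mk, PowerSeries.coeff_mk]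
      simp
  · rintro ⟨h1, h2, h3⟩
    have hi2 : 2 ≤ i := by
      by_contra h'
      have := hsupp 2 (by omega)
      omega
    have hsub : ({1, 2} : Finset ℕ) ⊆ Finset.Icc 1 i := by
      intro x hx
      simp only [Finset.mem_insert, Finset.mem_singleton] at hx
      rcases hx with rfl | rfl <;> exact Finset.mem_Icc.mpr ⟨by omega, by omega⟩
    have hMeq : M = i - 1 := by
      rw [hMdef, ← Finset.sum_subset hsub (fun j hj hj2 => by
        apply h3
        simp only [Finset.mem_insert, Finset.mem_singleton] at hj2
        have := (Finset.mem_Icc.mp hj).1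
        omega)]
      rw [Finset.sum_pair (by norm_num : (1:ℕ) ≠ 2), h1, h2]
      omega
    have hFeq : F = (PowerSeries.mk (fun g => (⇑D)^[1] (φg g))) ^ (i - 2) *
        (PowerSeries.mk (fun g => (⇑D)^[2] (φg g))) := by
      rw [hFdef, ← Finset.prod_subset hsub (fun j hj hj2 => by
        rw [h3 j (by
          simp only [Finset.mem_insert, Finset.mem_singleton] at hj2
          have := (Finset.mem_Icc.mp hj).1
          omega), pow_zero])]
      rw [Finset.prod_pair (by norm_num : (1:ℕ) ≠ 2), h1, h2, pow_one]
    constructor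
    · rw [hPc, hMeq, if_neg (by omega)]
    · rw [hPc, hMeq, if_pos (by omega)]
      rw [show (-(i:ℤ) + 1 + (i - 1 : ℕ)).toNat = 0 from by omega]
      rw [hFeq, PowerSeries.coeff_zero_eq_constantCoeff, map_mul, map_pow,
        PowerSeries.constantCoeff_mk, PowerSeries.constantCoeff_mk]
      simp
  · rintro ⟨hn1, hn2⟩
    obtain ⟨T, hTdef⟩ : ∃ T, T = ∑ j ∈ Finset.Icc 1 i, (j - 1) * m j := ⟨_, rfl⟩
    rw [← hTdef] at key
    have hT2 : 2 ≤ T := by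
      by_contra h
      push_neg at h
      have hT01 : T = 0 ∨ T = 1 := by omega
      rcases hT01 with hT0 | hT1
      · -- T = 0 : case 1 holds
        apply hn1
        have hz : ∀ j ∈ Finset.Icc 1 i, (j - 1) * m j = 0 :=
          Finset.sum_eq_zero_iff.mp (hTdef ▸ hT0)
        have h2 : ∀ j : ℕ, 2 ≤ j → m j = 0 := by
          intro j hj
          by_cases hji : j ≤ i
          · have := hz j (Finset.mem_Icc.mpr ⟨by omega, hji⟩)
            rcases Nat.mul_eq_zero.mp this with h' | h' <;> omega
          · exact hsupp j (by omega)
        refine ⟨?_, h2⟩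
        rcases Nat.eq_zero_or_pos i with hi | hi
        · rw [hi]; exact hsupp 1 (by omega)
        · have hs : ∑ j ∈ Finset.Icc 1 i, j * m j = 1 * m 1 :=
            Finset.sum_eq_single_of_mem 1 (Finset.mem_Icc.mpr ⟨le_refl 1, hi⟩)
              (fun j hj hne => by
                rw [h2 j (by have := (Finset.mem_Icc.mp hj).1; omega), Nat.mul_zero])
          omega
      · -- T = 1 : case 2 holds
        apply hn2
        have hz3 : ∀ j : ℕ, 3 ≤ j → m j = 0 := by
          intro j hj
          by_cases hji : j ≤ i
          · have hle : (j - 1) * m j ≤ T :=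
              hTdef ▸ Finset.single_le_sum (f := fun j => (j - 1) * m j)
                (fun _ _ => Nat.zero_le _) (Finset.mem_Icc.mpr ⟨by omega, hji⟩)
            by_contra h'
            have : 2 * 1 ≤ (j - 1) * m j := Nat.mul_le_mul (by omega) (by omega)
            omega
          · exact hsupp j (by omega)
        have hi2 : 2 ≤ i := by
          by_contra h'
          have hT0 : T = 0 := by
            rw [hTdef]
            apply Finset.sum_eq_zero
            intro j hj
            have hj' := Finset.mem_Icc.mp hj
            have hj1 : j = 1 := by omega
            subst hj1
            simp
          omega
        have hm2 : m 2 = 1 := by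
          have hTm2 : T = (2 - 1) * m 2 := by
            rw [hTdef]
            apply Finset.sum_eq_single_of_mem 2 (Finset.mem_Icc.mpr ⟨by omega, hi2⟩)
            intro j hj hne
            have hj' := Finset.mem_Icc.mp hj
            rcases Nat.lt_or_ge j 2 with h' | h'
            · have hj1 : j = 1 := by omega
              subst hj1
              simp
            · rw [hz3 j (by omega), Nat.mul_zero]
          omega
        have hsub : ({1, 2} : Finset ℕ) ⊆ Finset.Icc 1 i := by
          intro x hx
          simp only [Finset.mem_insert, Finset.mem_singleton] at hx
          rcases hx with rfl | rfl <;> exact Finset.mem_Icc.mpr ⟨by omega, by omega⟩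
        have hm1 : m 1 = i - 2 := by
          have hs : ∑ j ∈ ({1, 2} : Finset ℕ), j * m j = i := by
            rw [Finset.sum_subset hsub (fun j hj hj2 => by
              rw [hz3 j (by
                simp only [Finset.mem_insert, Finset.mem_singleton] at hj2
                have := (Finset.mem_Icc.mp hj).1
                omega), Nat.mul_zero])]
            exact hsum
          rw [Finset.sum_pair (by norm_num : (1:ℕ) ≠ 2), hm2] at hs
          omega
        exact ⟨hm1, hm2, hz3⟩
    constructor
    · rw [hPc, if_neg (by omega)]
    · rw [hPc, if_neg (by omega)]
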